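/- The generating function H(x) = z(x)^a/a - z(x)^{2a}/2, where z = x e^{z^a}, satisfies the differential equation (x/a) H'(x) - H(x) = (x^2/2) H'(x)^2. -/

import Mathlib

open PowerSeries

/-- `expOf f = exp ∘ f` for a power series `f` with zero constant term. -/
noncomputable def expOf (f : PowerSeries ℚ) : PowerSeries ℚ :=
  PowerSeries.mk fun n =>
    ∑ m ∈ Finset.range (n + 1), (PowerSeries.coeff n (f ^ m)) / Nat.factorial m

/-- Formal derivative `d/dx` of a power series. -/
noncomputable def pderiv (f : PowerSeries ℚ) : PowerSeries ℚ :=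
  PowerSeries.mk fun n => ((n : ℚ) + 1) * PowerSeries.coeff (n + 1) f

lemma pderiv_eq (f : PowerSeries ℚ) : pderiv f = d⁄dX ℚ f := by
  ext n
  rw [pderiv, coeff_mk, coeff_derivative, mul_comm]

lemma coeff_pow_zero_of_lt {f : PowerSeries ℚ} (hf : constantCoeff f = 0)
    {n m : ℕ} (h : n < m) : PowerSeries.coeff n (f ^ m) = 0 := by
  have hd : (X : PowerSeries ℚ) ^ m ∣ f ^ m :=
    pow_dvd_pow_of_dvd (PowerSeries.X_dvd_iff.mpr hf) m
  exact (PowerSeries.X_pow_dvd_iff.mp hd) n h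

/-- Truncated exponential sum. -/
noncomputable def Epoly (f : PowerSeries ℚ) (N : ℕ) : PowerSeries ℚ :=
  ∑ m ∈ Finset.range N, PowerSeries.C (1 / (Nat.factorial m : ℚ)) * f ^ m

lemma coeff_expOf {f : PowerSeries ℚ} (hf : constantCoeff f = 0) {n N : ℕ} (h : n < N) :
    PowerSeries.coeff n (expOf f) = PowerSeries.coeff n (Epoly f N) := by
  rw [expOf, coeff_mk, Epoly, map_sum]
  have hsummand : ∀ m : ℕ,
      PowerSeries.coeff n (f ^ m) / (Nat.factorial m : ℚ)
        = PowerSeries.coeff n (PowerSeries.C (1 / (Nat.factorial m : ℚ)) * f ^ m) := by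
    intro m
    rw [PowerSeries.coeff_C_mul]
    ring
  simp_rw [hsummand]
  apply Finset.sum_subset (Finset.range_subset_range.mpr h)
  intro m _ hm
  have hnm : n < m := by simpa using hm
  rw [PowerSeries.coeff_C_mul, coeff_pow_zero_of_lt hf hnm, mul_zero]

lemma deriv_C_mul (c : ℚ) (f : PowerSeries ℚ) :
    d⁄dX ℚ (PowerSeries.C c * f) = PowerSeries.C c * d⁄dX ℚ f := by
  rw [Derivation.leibniz, derivative_C, smul_zero, add_zero, smul_eq_mul]

lemma psDerivPow (f : PowerSeries ℚ) (n : ℕ) :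
    d⁄dX ℚ (f ^ n) = PowerSeries.C (n : ℚ) * f ^ (n - 1) * d⁄dX ℚ f := by
  rw [Derivation.leibniz_pow, smul_eq_mul, nsmul_eq_mul, mul_assoc,
    ← map_natCast (PowerSeries.C (R := ℚ)) n]

lemma Epoly_succ (f : PowerSeries ℚ) (N : ℕ) :
    Epoly f (N + 1) = Epoly f N + PowerSeries.C (1 / (Nat.factorial N : ℚ)) * f ^ N :=
  Finset.sum_range_succ _ N

lemma deriv_Epoly (f : PowerSeries ℚ) (N : ℕ) :
    d⁄dX ℚ (Epoly f (N + 1)) = d⁄dX ℚ f * Epoly f N := by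
  induction N with
  | zero =>
      simp [Epoly, Finset.sum_range_succ]
  | succ N ih =>
      rw [Epoly_succ, map_add, ih, deriv_C_mul, psDerivPow, Epoly_succ]
      have hfac : (1 / ((Nat.factorial (N + 1) : ℚ))) * (((N + 1 : ℕ) : ℚ))
          = 1 / (Nat.factorial N : ℚ) := by
        rw [Nat.factorial_succ]
        push_cast
        field_simp
      have hC : PowerSeries.C (1 / ((Nat.factorial (N + 1) : ℚ)))
            * PowerSeries.C (((N + 1 : ℕ) : ℚ))
          = PowerSeries.C (1 / (Nat.factorial N : ℚ)) := by
        rw [← map_mul, hfac]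
      simp only [Nat.add_sub_cancel]
      linear_combination (f ^ N * d⁄dX ℚ f) * hC

lemma pderiv_expOf {f : PowerSeries ℚ} (hf : constantCoeff f = 0) :
    d⁄dX ℚ (expOf f) = d⁄dX ℚ f * expOf f := by
  ext n
  rw [coeff_derivative, coeff_expOf hf (show n + 1 < n + 2 by omega),
    ← coeff_derivative, deriv_Epoly, PowerSeries.coeff_mul, PowerSeries.coeff_mul]
  apply Finset.sum_congr rfl
  intro p hp
  have hp2 : p.2 < n + 1 :=
    Nat.lt_succ_of_le (Finset.HasAntidiagonal.antidiagonal.snd_le hp)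
  rw [coeff_expOf hf hp2]

/-- With `z` the formal power series solution of `z = x exp(z^a)`, `z(0)=0`, the
generating function `H = z^a/a - z^{2a}/2` satisfies
`(x/a) H' - H = (x²/2) (H')²`. -/
theorem H01_differential_equation (a : ℕ) (ha : 0 < a)
    (z : PowerSeries ℚ) (h0 : PowerSeries.constantCoeff z = 0)
    (hz : z = PowerSeries.X * expOf (z ^ a)) :
    PowerSeries.C (1 / (a : ℚ)) * PowerSeries.X *
        pderiv (PowerSeries.C (1 / (a : ℚ)) * z ^ a - PowerSeries.C (1 / 2 : ℚ) * z ^ (2 * a))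
      - (PowerSeries.C (1 / (a : ℚ)) * z ^ a - PowerSeries.C (1 / 2 : ℚ) * z ^ (2 * a))
      = PowerSeries.C (1 / 2 : ℚ) * PowerSeries.X ^ 2 *
          (pderiv (PowerSeries.C (1 / (a : ℚ)) * z ^ a
            - PowerSeries.C (1 / 2 : ℚ) * z ^ (2 * a))) ^ 2 := by
  have hane : (a : ℚ) ≠ 0 := Nat.cast_ne_zero.mpr ha.ne'
  have hw0 : constantCoeff (z ^ a) = 0 := by
    rw [map_pow, h0, zero_pow ha.ne']
  have hzz : z ^ (a - 1) * z = z ^ a := by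
    rw [← pow_succ, Nat.sub_add_cancel ha]
  have hDa : d⁄dX ℚ (z ^ a) = PowerSeries.C (a : ℚ) * z ^ (a - 1) * d⁄dX ℚ z :=
    psDerivPow z a
  have hD2a : d⁄dX ℚ (z ^ (2 * a))
      = PowerSeries.C ((2 * a : ℕ) : ℚ) * z ^ (2 * a - 1) * d⁄dX ℚ z :=
    psDerivPow z (2 * a)
  have hzd2 : d⁄dX ℚ z = expOf (z ^ a)
      + PowerSeries.X * ((PowerSeries.C (a : ℚ) * z ^ (a - 1) * d⁄dX ℚ z)
          * expOf (z ^ a)) := by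
    conv_lhs => rw [hz]
    rw [Derivation.leibniz, derivative_X, pderiv_expOf hw0, hDa, smul_eq_mul, smul_eq_mul,
      mul_one]
    ring
  have key1 : PowerSeries.X * d⁄dX ℚ z
      = z + PowerSeries.C (a : ℚ) * z ^ a * (PowerSeries.X * d⁄dX ℚ z) := by
    linear_combination PowerSeries.X * hzd2
      - (1 + PowerSeries.C (a : ℚ) * PowerSeries.X * d⁄dX ℚ z * z ^ (a - 1)) * hz
      + (PowerSeries.C (a : ℚ) * PowerSeries.X * d⁄dX ℚ z) * hzz
  have hca : PowerSeries.C (1 / (a : ℚ)) * PowerSeries.C (a : ℚ) = 1 := by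
    rw [← map_mul, one_div, inv_mul_cancel₀ hane, map_one]
  have hc2 : PowerSeries.C (1 / 2 : ℚ) * PowerSeries.C ((2 * a : ℕ) : ℚ)
      = PowerSeries.C (a : ℚ) := by
    rw [← map_mul]
    congr 1
    push_cast
    ring
  have hpow2 : z ^ (2 * a - 1) = z ^ (a - 1) * z ^ a := by
    rw [← pow_add]
    congr 1
    omega
  have hDH : d⁄dX ℚ (PowerSeries.C (1 / (a : ℚ)) * z ^ a
        - PowerSeries.C (1 / 2 : ℚ) * z ^ (2 * a))
      = PowerSeries.C (1 / (a : ℚ))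
          * (PowerSeries.C (a : ℚ) * z ^ (a - 1) * d⁄dX ℚ z)
        - PowerSeries.C (1 / 2 : ℚ)
          * (PowerSeries.C ((2 * a : ℕ) : ℚ) * z ^ (2 * a - 1) * d⁄dX ℚ z) := by
    rw [map_sub, deriv_C_mul, deriv_C_mul, hDa, hD2a]
  have key2 : PowerSeries.X * d⁄dX ℚ (PowerSeries.C (1 / (a : ℚ)) * z ^ a
        - PowerSeries.C (1 / 2 : ℚ) * z ^ (2 * a)) = z ^ a := by
    linear_combination PowerSeries.X * hDH
      + (PowerSeries.X * z ^ (a - 1) * d⁄dX ℚ z) * hca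
      - (PowerSeries.X * z ^ (2 * a - 1) * d⁄dX ℚ z) * hc2
      - (PowerSeries.C (a : ℚ) * PowerSeries.X * d⁄dX ℚ z) * hpow2
      + z ^ (a - 1) * key1 + hzz
  have hsq : z ^ (2 * a) = z ^ a * z ^ a := by
    rw [two_mul, pow_add]
  rw [pderiv_eq]
  linear_combination (PowerSeries.C (1 / (a : ℚ))) * key2
    + PowerSeries.C (1 / 2 : ℚ) * hsq
    - PowerSeries.C (1 / 2 : ℚ)
        * (z ^ a + PowerSeries.X * d⁄dX ℚ (PowerSeries.C (1 / (a : ℚ)) * z ^ a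
            - PowerSeries.C (1 / 2 : ℚ) * z ^ (2 * a))) * key2
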